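/- Let Γ ∈ (1,2], D > 0, m ∈ R^2, and E > sqrt(D^2 + ‖m‖^2). Define Φ(p) = p/(Γ-1) - E + ‖m‖^2/(E+p) + D·sqrt(1 - ‖m‖^2/(E+p)^2). Then Φ(0) < 0 and Φ(p) → +∞ as p → +∞; consequently there exists a unique p* > 0 with Φ(p*) = 0. -/
import Mathlib


/-- `Φ(0) < 0`, `Φ(p) → +∞` as `p → +∞`, and there is a unique positive root of `Φ`. -/
theorem pressure_eq_unique_root
    (Γ D E : ℝ) (m : EuclideanSpace ℝ (Fin 2))
    (hΓ1 : 1 < Γ) (hΓ2 : Γ ≤ 2) (hD : 0 < D)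
    (hE : Real.sqrt (D ^ 2 + ‖m‖ ^ 2) < E)
    (Φ : ℝ → ℝ)
    (hΦ : ∀ p : ℝ, Φ p = p / (Γ - 1) - E + ‖m‖ ^ 2 / (E + p)
      + D * Real.sqrt (1 - ‖m‖ ^ 2 / (E + p) ^ 2)) :
    Φ 0 < 0 ∧ Filter.Tendsto Φ Filter.atTop Filter.atTop ∧
    ∃! p : ℝ, 0 < p ∧ Φ p = 0 := by
  set M : ℝ := ‖m‖ ^ 2 with hMdef
  have hM : 0 ≤ M := by positivity
  have hE0 : 0 < E := lt_of_le_of_lt (Real.sqrt_nonneg _) hE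
  have hE2 : D ^ 2 + M < E ^ 2 := by
    nlinarith [Real.sq_sqrt (show (0:ℝ) ≤ D ^ 2 + M by positivity),
      Real.sqrt_nonneg (D ^ 2 + M)]
  have hME : M < E ^ 2 := by nlinarith
  -- Part 1 : Φ 0 < 0
  have hΦ0 : Φ 0 < 0 := by
    set s : ℝ := Real.sqrt (E ^ 2 - M) with hsdef
    have hs2 : s ^ 2 = E ^ 2 - M := Real.sq_sqrt (by linarith)
    have hspos : 0 < s := Real.sqrt_pos.mpr (by linarith)
    have hDs : D < s := by nlinarith
    have hsqrt : Real.sqrt (1 - M / (E + 0) ^ 2) = s / E := by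
      have h1 : 1 - M / (E + 0) ^ 2 = (s / E) ^ 2 := by
        field_simp
        nlinarith
      rw [h1, Real.sqrt_sq (by positivity)]
    rw [hΦ 0, hsqrt]
    rw [show (0:ℝ) / (Γ - 1) - E + M / (E + 0) + D * (s / E)
        = (-(E ^ 2) + M + D * s) / E by field_simp; ring]
    apply div_neg_of_neg_of_pos _ hE0
    nlinarith
  -- Part 2 : tendsto atTop
  have htend : Filter.Tendsto Φ Filter.atTop Filter.atTop := by
    have h1 : Filter.Tendsto (fun p : ℝ => p / (Γ - 1) - E) Filter.atTop Filter.atTop := by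
      apply Filter.tendsto_atTop_add_const_right
      exact Filter.tendsto_id.atTop_div_const (by linarith)
    apply Filter.tendsto_atTop_mono' _ _ h1
    filter_upwards [Filter.eventually_ge_atTop (0:ℝ)] with p hp
    rw [hΦ p]
    have hEp : 0 < E + p := by linarith
    have h2 : 0 ≤ M / (E + p) := by positivity
    have h3 : 0 ≤ D * Real.sqrt (1 - M / (E + p) ^ 2) := by positivity
    linarith
  refine ⟨hΦ0, htend, ?_⟩
  -- Part 3 : unique positive root
  have hmono : StrictMonoOn Φ (Set.Ici (0:ℝ)) := by
    intro p hp q hq hpq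
    simp only [Set.mem_Ici] at hp hq
    rw [hΦ p, hΦ q]
    have hEp : 0 < E + p := by linarith
    have hEq : 0 < E + q := by linarith
    have hsq : Real.sqrt (1 - M / (E + p) ^ 2) ≤ Real.sqrt (1 - M / (E + q) ^ 2) := by
      apply Real.sqrt_le_sqrt
      have : M / (E + q) ^ 2 ≤ M / (E + p) ^ 2 := by
        gcongr
      linarith
    have hDs : D * Real.sqrt (1 - M / (E + p) ^ 2) ≤ D * Real.sqrt (1 - M / (E + q) ^ 2) := by
      exact mul_le_mul_of_nonneg_left hsq hD.le
    have e1 : M / (E + p) - M / (E + q) = M * (q - p) / ((E + p) * (E + q)) := by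
      field_simp
      ring
    have e2 : M * (q - p) / ((E + p) * (E + q)) < q - p := by
      rw [div_lt_iff₀ (by positivity)]
      have hprod : M < (E + p) * (E + q) := by nlinarith
      nlinarith [mul_lt_mul_of_pos_left hprod (sub_pos.mpr hpq)]
    have e3 : q - p ≤ (q - p) / (Γ - 1) := by
      rw [le_div_iff₀ (by linarith)]
      nlinarith
    have e4 : (q - p) / (Γ - 1) = q / (Γ - 1) - p / (Γ - 1) := by ring
    linarith
  -- existence
  obtain ⟨N, hN1, hN0⟩ : ∃ N : ℝ, 0 < Φ N ∧ 0 ≤ N := by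
    have := (htend.eventually_gt_atTop 0).and (Filter.eventually_ge_atTop (0:ℝ))
    obtain ⟨N, h1, h2⟩ := this.exists
    exact ⟨N, h1, h2⟩
  have hcont : ContinuousOn Φ (Set.Icc 0 N) := by
    apply ContinuousOn.congr (f := fun p : ℝ => p / (Γ - 1) - E + M / (E + p)
      + D * Real.sqrt (1 - M / (E + p) ^ 2))
    · have hne : ∀ x ∈ Set.Icc (0:ℝ) N, E + x ≠ 0 := by
        intro x hx
        have := hx.1
        positivity
      apply ContinuousOn.add
      apply ContinuousOn.add
      · exact ((continuousOn_id.div_const _).sub continuousOn_const)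
      · exact continuousOn_const.div (continuousOn_const.add continuousOn_id) hne
      · apply ContinuousOn.mul continuousOn_const
        apply Real.continuous_sqrt.comp_continuousOn
        apply ContinuousOn.sub continuousOn_const
        exact continuousOn_const.div ((continuousOn_const.add continuousOn_id).pow 2)
          (fun x hx => pow_ne_zero _ (hne x hx))
    · intro p _
      exact hΦ p
  have hIVT := intermediate_value_Icc hN0 hcont
  have h0mem : (0:ℝ) ∈ Set.Icc (Φ 0) (Φ N) := ⟨hΦ0.le, hN1.le⟩
  obtain ⟨p, hpmem, hΦp⟩ := hIVT h0mem
  have hppos : 0 < p := by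
    rcases lt_or_eq_of_le hpmem.1 with h | h
    · exact h
    · exfalso; rw [← h] at hΦp; linarith
  refine ⟨p, ⟨hppos, hΦp⟩, ?_⟩
  rintro q ⟨hq0, hΦq⟩
  exact hmono.injOn (Set.mem_Ici.mpr hq0.le) (Set.mem_Ici.mpr hppos.le) (by rw [hΦq, hΦp])
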